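/- Let p ≥ 1, δ ≥ 0, x ≥ 0. If |x - 1| ≥ δ then |x^p - 1| ≥ max{δ, δ^p}. -/

import Mathlib

open Real

lemma aux_abs_le (p x : ℝ) (hp : 1 ≤ p) (hx : 0 ≤ x) : |x - 1| ≤ |x ^ p - 1| := by
  rcases le_total x 1 with h1 | h1
  · have hxp : x ^ p ≤ x := by
      rcases eq_or_lt_of_le hx with h0 | h0
      · simp [← h0, Real.zero_rpow (by linarith : p ≠ 0)]
      · calc x ^ p ≤ x ^ (1:ℝ) := Real.rpow_le_rpow_of_exponent_ge h0 h1 hp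
          _ = x := Real.rpow_one x
    have hxp1 : x ^ p ≤ 1 := hxp.trans h1
    rw [abs_of_nonpos (by linarith), abs_of_nonpos (by linarith)]
    linarith
  · have hxp : x ≤ x ^ p := by
      calc x = x ^ (1:ℝ) := (Real.rpow_one x).symm
        _ ≤ x ^ p := Real.rpow_le_rpow_of_exponent_le h1 hp
    rw [abs_of_nonneg (by linarith), abs_of_nonneg (by linarith)]
    linarith

lemma aux_superadd (p δ : ℝ) (hp : 1 ≤ p) (hδ : 0 ≤ δ) : 1 + δ ^ p ≤ (1 + δ) ^ p := by
  have h := NNReal.add_rpow_le_rpow_add (1 : NNReal) ⟨δ, hδ⟩ hp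
  have h' := (NNReal.coe_le_coe).2 h
  push_cast [NNReal.coe_rpow] at h'
  rw [Real.one_rpow] at h'
  exact h'

/-- For `p ≥ 1`, `δ ≥ 0`, `x ≥ 0`: if `|x - 1| ≥ δ` then `|x^p - 1| ≥ max {δ, δ^p}`. -/
theorem stmt17 (p δ x : ℝ) (hp : 1 ≤ p) (hδ : 0 ≤ δ) (hx : 0 ≤ x)
    (h : δ ≤ |x - 1|) : max δ (δ ^ p) ≤ |x ^ p - 1| := by
  have hA : δ ≤ |x ^ p - 1| := h.trans (aux_abs_le p x hp hx)
  refine max_le hA ?_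
  rcases le_or_gt δ 1 with hδ1 | hδ1
  · refine le_trans ?_ hA
    rcases eq_or_lt_of_le hδ with h0 | h0
    · simp [← h0, Real.zero_rpow (by linarith : p ≠ 0)]
    · calc δ ^ p ≤ δ ^ (1:ℝ) := Real.rpow_le_rpow_of_exponent_ge h0 hδ1 hp
        _ = δ := Real.rpow_one δ
  · have hx1 : 1 + δ ≤ x := by
      rcases abs_cases (x - 1) with ⟨he, _⟩ | ⟨he, _⟩
      · rw [he] at h; linarith
      · rw [he] at h; linarith
    have h1 : (1 + δ) ^ p ≤ x ^ p :=
      Real.rpow_le_rpow (by linarith) hx1 (by linarith)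
    have h2 := aux_superadd p δ hp hδ
    have h3 : 0 ≤ δ ^ p := Real.rpow_nonneg hδ p
    rw [abs_of_nonneg (by linarith)]
    linarith
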